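/- Let U = [u_1,…,u_{d1}] ∈ ℝ^{d2×d1} and V = [v_1,…,v_{d1}] ∈ ℝ^{d0×d1}, let A^{(1)},…,A^{(n)} ∈ ℝ^{d2×d0} be fixed measurement matrices, let y_1,…,y_n ∈ ℝ, and let p ∈ [0,1). Let B be a random d1×d1 diagonal matrix whose diagonal entries are independent, each taking value 1/(1−p) with probability 1−p and 0 with probability p. Then (1/n)·Σ_{i=1}^n E_B[(y_i − ⟨U B Vᵀ, A^{(i)}⟩)²] = (1/n)·Σ_{i=1}^n (y_i − ⟨U Vᵀ, A^{(i)}⟩)² + (p/(1−p))·(1/n)·Σ_{i=1}^n Σ_{j=1}^{d1} (u_jᵀ A^{(i)} v_j)². -/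

import Mathlib

set_option maxHeartbeats 1000000

open MeasureTheory Matrix

section aux
variable {m : ℕ} (p : ℝ)

lemma sum_prod_bool (f : Fin m → Bool → ℝ) :
    ∑ ω : Fin m → Bool, ∏ j, f j (ω j) = ∏ j, (f j true + f j false) := by
  have h := Finset.prod_univ_sum (fun _ : Fin m => (Finset.univ : Finset Bool)) f
  simp only [Fintype.piFinset_univ] at h
  rw [← h]
  exact Finset.prod_congr rfl fun j _ => by simp [Fintype.sum_bool]

/-- weight of a mask value -/
noncomputable def wB (p : ℝ) (b : Bool) : ℝ := if b then 1 - p else p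
/-- dropout scale of a mask value -/
noncomputable def xB (p : ℝ) (b : Bool) : ℝ := if b then (1 - p)⁻¹ else 0

lemma moment0 : ∑ ω : Fin m → Bool, ∏ j, wB p (ω j) = 1 := by
  rw [sum_prod_bool]
  simp [wB]

variable (hp1 : p < 1)
include hp1

lemma moment1 (k : Fin m) :
    ∑ ω : Fin m → Bool, (∏ j, wB p (ω j)) * xB p (ω k) = 1 := by
  have hne : (1 : ℝ) - p ≠ 0 := by linarith
  have h1 : ∑ ω : Fin m → Bool, (∏ j, wB p (ω j)) * xB p (ω k)
      = ∑ ω : Fin m → Bool, ∏ j, (fun (j : Fin m) (b : Bool) =>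
          wB p b * (if j = k then xB p b else 1)) j (ω j) := by
    refine Finset.sum_congr rfl fun ω _ => ?_
    rw [Finset.prod_mul_distrib, Finset.prod_ite_eq' Finset.univ k (fun j => xB p (ω j))]
    simp
  rw [h1, sum_prod_bool (fun (j : Fin m) (b : Bool) =>
      wB p b * (if j = k then xB p b else 1))]
  apply Finset.prod_eq_one
  intro j _
  by_cases h : j = k
  · simp [h, wB, xB]; field_simp
  · simp [h, wB, xB]

lemma moment2 (k l : Fin m) :
    ∑ ω : Fin m → Bool, (∏ j, wB p (ω j)) * (xB p (ω k) * xB p (ω l))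
      = if k = l then (1 - p)⁻¹ else 1 := by
  have hne : (1 : ℝ) - p ≠ 0 := by linarith
  have h1 : ∑ ω : Fin m → Bool, (∏ j, wB p (ω j)) * (xB p (ω k) * xB p (ω l))
      = ∑ ω : Fin m → Bool, ∏ j, (fun (j : Fin m) (b : Bool) =>
          wB p b * ((if j = k then xB p b else 1) * (if j = l then xB p b else 1))) j (ω j) := by
    refine Finset.sum_congr rfl fun ω _ => ?_
    rw [Finset.prod_mul_distrib, Finset.prod_mul_distrib,
      Finset.prod_ite_eq' Finset.univ k (fun j => xB p (ω j)),
      Finset.prod_ite_eq' Finset.univ l (fun j => xB p (ω j))]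
    simp
  rw [h1, sum_prod_bool (fun (j : Fin m) (b : Bool) =>
      wB p b * ((if j = k then xB p b else 1) * (if j = l then xB p b else 1)))]
  have h2 : ∀ j : Fin m,
      wB p true * ((if j = k then xB p true else 1) * (if j = l then xB p true else 1))
        + wB p false * ((if j = k then xB p false else 1) * (if j = l then xB p false else 1))
      = if j = k ∧ j = l then (1 - p)⁻¹ else 1 := by
    intro j
    by_cases hk : j = k <;> by_cases hl : j = l <;> simp [hk, hl, wB, xB] <;>
      field_simp
  simp_rw [h2]
  by_cases hkl : k = l
  · subst hkl
    simp only [and_self, if_pos rfl]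
    rw [Finset.prod_eq_single k (by intro b _ hb; simp [hb]) (by simp)]
    simp
  · rw [if_neg hkl]
    apply Finset.prod_eq_one
    intro j _
    rw [if_neg]
    rintro ⟨h1', h2'⟩
    exact hkl (h1' ▸ h2')

lemma key_sum (c : Fin m → ℝ) (yv : ℝ) :
    ∑ ω : Fin m → Bool, (∏ j, wB p (ω j)) * (yv - ∑ j, xB p (ω j) * c j) ^ 2
      = (yv - ∑ j, c j) ^ 2 + (p / (1 - p)) * ∑ j, (c j) ^ 2 := by
  have hne : (1 : ℝ) - p ≠ 0 := by linarith
  have expand : ∀ ω : Fin m → Bool,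
      (∏ j, wB p (ω j)) * (yv - ∑ j, xB p (ω j) * c j) ^ 2
        = (∏ j, wB p (ω j)) * yv ^ 2
          - ∑ k, (2 * yv * c k) * ((∏ j, wB p (ω j)) * xB p (ω k))
          + ∑ k, ∑ l, (c k * c l) * ((∏ j, wB p (ω j)) * (xB p (ω k) * xB p (ω l))) := by
    intro ω
    have e1 : ∑ k, (2 * yv * c k) * ((∏ j, wB p (ω j)) * xB p (ω k))
        = 2 * yv * ((∏ j, wB p (ω j)) * ∑ j, xB p (ω j) * c j) := by
      calc ∑ k, (2 * yv * c k) * ((∏ j, wB p (ω j)) * xB p (ω k))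
          = ∑ k, 2 * yv * ((∏ j, wB p (ω j)) * (xB p (ω k) * c k)) :=
            Finset.sum_congr rfl fun k _ => by ring
        _ = 2 * yv * ∑ k, (∏ j, wB p (ω j)) * (xB p (ω k) * c k) :=
            (Finset.mul_sum _ _ _).symm
        _ = 2 * yv * ((∏ j, wB p (ω j)) * ∑ j, xB p (ω j) * c j) := by
            rw [← Finset.mul_sum]
    have e2 : ∑ k, ∑ l, (c k * c l) * ((∏ j, wB p (ω j)) * (xB p (ω k) * xB p (ω l)))
        = (∏ j, wB p (ω j)) * ((∑ k, xB p (ω k) * c k) * (∑ l, xB p (ω l) * c l)) := by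
      calc ∑ k, ∑ l, (c k * c l) * ((∏ j, wB p (ω j)) * (xB p (ω k) * xB p (ω l)))
          = ∑ k, ∑ l, (∏ j, wB p (ω j)) * ((xB p (ω k) * c k) * (xB p (ω l) * c l)) :=
            Finset.sum_congr rfl fun k _ => Finset.sum_congr rfl fun l _ => by ring
        _ = ∑ k, (∏ j, wB p (ω j)) * ∑ l, (xB p (ω k) * c k) * (xB p (ω l) * c l) :=
            Finset.sum_congr rfl fun k _ => (Finset.mul_sum _ _ _).symm
        _ = (∏ j, wB p (ω j)) * ∑ k, ∑ l, (xB p (ω k) * c k) * (xB p (ω l) * c l) :=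
            (Finset.mul_sum _ _ _).symm
        _ = (∏ j, wB p (ω j)) * ((∑ k, xB p (ω k) * c k) * (∑ l, xB p (ω l) * c l)) := by
            rw [← Finset.sum_mul_sum]
    rw [e1, e2]
    ring
  calc ∑ ω : Fin m → Bool, (∏ j, wB p (ω j)) * (yv - ∑ j, xB p (ω j) * c j) ^ 2
      = (∑ ω : Fin m → Bool, (∏ j, wB p (ω j)) * yv ^ 2)
          - ∑ ω : Fin m → Bool, ∑ k, (2 * yv * c k) * ((∏ j, wB p (ω j)) * xB p (ω k))
          + ∑ ω : Fin m → Bool, ∑ k, ∑ l,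
              (c k * c l) * ((∏ j, wB p (ω j)) * (xB p (ω k) * xB p (ω l))) := by
        rw [← Finset.sum_sub_distrib, ← Finset.sum_add_distrib]
        exact Finset.sum_congr rfl fun ω _ => expand ω
    _ = yv ^ 2 - ∑ k, (2 * yv * c k)
          + ∑ k, ∑ l, (c k * c l) * (if k = l then (1 - p)⁻¹ else 1) := by
        congr 1
        · congr 1
          · rw [← Finset.sum_mul, moment0, one_mul]
          · rw [Finset.sum_comm]
            refine Finset.sum_congr rfl fun k _ => ?_
            rw [← Finset.mul_sum, moment1 p hp1, mul_one]
        · rw [Finset.sum_comm]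
          refine Finset.sum_congr rfl fun k _ => ?_
          rw [Finset.sum_comm]
          refine Finset.sum_congr rfl fun l _ => ?_
          rw [← Finset.mul_sum, moment2 p hp1]
    _ = (yv - ∑ j, c j) ^ 2 + (p / (1 - p)) * ∑ j, (c j) ^ 2 := by
        have hsplit : ∀ k l : Fin m, (c k * c l) * (if k = l then (1 - p)⁻¹ else 1)
            = c k * c l + (if k = l then (p / (1 - p)) * (c k) ^ 2 else 0) := by
          intro k l
          by_cases h : k = l
          · subst h
            rw [if_pos rfl, if_pos rfl]
            field_simp
            ring
          · simp [h]
        simp_rw [hsplit, Finset.sum_add_distrib, Finset.sum_ite_eq, Finset.mem_univ, if_true]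
        rw [← Finset.sum_mul_sum, ← Finset.mul_sum, ← Finset.mul_sum]
        ring
end aux

lemma trace_diag_eq {d0 d1 d2 : ℕ} (U : Matrix (Fin d2) (Fin d1) ℝ)
    (V : Matrix (Fin d0) (Fin d1) ℝ) (A : Matrix (Fin d2) (Fin d0) ℝ) (d : Fin d1 → ℝ) :
    Matrix.trace ((U * Matrix.diagonal d * Vᵀ)ᵀ * A)
      = ∑ j, d j * ((fun a => U a j) ⬝ᵥ A.mulVec (fun b => V b j)) := by
  simp only [Matrix.trace, Matrix.diag, Matrix.mul_apply, Matrix.transpose_apply,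
    Matrix.mul_diagonal, dotProduct, Matrix.mulVec, Finset.mul_sum, Finset.sum_mul]
  simp only [Matrix.diagonal_apply, mul_ite, mul_zero, ite_mul, zero_mul, Finset.sum_ite_eq,
    Finset.sum_ite_eq', Finset.mem_univ, if_true]
  calc ∑ x : Fin d0, ∑ x1 : Fin d2, ∑ x2 : Fin d1, U x1 x2 * d x2 * V x x2 * A x1 x
      = ∑ x : Fin d0, ∑ x2 : Fin d1, ∑ x1 : Fin d2, U x1 x2 * d x2 * V x x2 * A x1 x :=
        Finset.sum_congr rfl fun x _ => Finset.sum_comm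
    _ = ∑ x2 : Fin d1, ∑ x : Fin d0, ∑ x1 : Fin d2, U x1 x2 * d x2 * V x x2 * A x1 x :=
        Finset.sum_comm
    _ = ∑ x2 : Fin d1, ∑ x1 : Fin d2, ∑ x : Fin d0, U x1 x2 * d x2 * V x x2 * A x1 x :=
        Finset.sum_congr rfl fun x2 _ => Finset.sum_comm
    _ = ∑ x : Fin d1, ∑ x1 : Fin d2, ∑ i : Fin d0, d x * (U x1 x * (A x1 i * V i x)) :=
        Finset.sum_congr rfl fun x2 _ => Finset.sum_congr rfl fun x1 _ =>
          Finset.sum_congr rfl fun x _ => by ring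

/-- The law of a single dropout mask entry: takes value `true` (kept) with
probability `1 - p` and `false` (dropped) with probability `p`. -/
noncomputable def dropMeasure (p : ℝ) (hp0 : 0 ≤ p) : Measure Bool :=
  (PMF.bernoulli (Real.toNNReal (1 - p))
    (Real.toNNReal_le_one.mpr (by linarith))).toMeasure

instance dropMeasure.instIsProbabilityMeasure (p : ℝ) (hp0 : 0 ≤ p) :
    IsProbabilityMeasure (dropMeasure p hp0) :=
  PMF.toMeasure.isProbabilityMeasure _

lemma dropMeasure_singleton (p : ℝ) (hp0 : 0 ≤ p) (hp1 : p < 1) (b : Bool) :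
    ((dropMeasure p hp0) {b}).toReal = wB p b := by
  rw [dropMeasure, PMF.toMeasure_apply_singleton _ _ (by measurability)]
  cases b <;> simp [PMF.bernoulli, wB]
  case false =>
    rw [show (((1 - p).toNNReal : NNReal) : ENNReal) = ENNReal.ofReal (1 - p) from rfl]
    rw [← ENNReal.ofReal_one, ← ENNReal.ofReal_sub _ (by linarith)]
    simpa using ENNReal.toReal_ofReal hp0
  case true => linarith

/-- **Dropout objective for matrix sensing.**
The average over the random diagonal dropout matrix `B` (diagonal entries iid,
`1/(1-p)` w.p. `1-p` and `0` w.p. `p`) of the empirical risk equals the plain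
empirical risk plus `p/(1-p)` times the explicit regularizer
`(1/n) Σ_i Σ_j (u_jᵀ A^{(i)} v_j)²`. -/
theorem dropout_objective_matrix_sensing
    {d0 d1 d2 n : ℕ}
    (U : Matrix (Fin d2) (Fin d1) ℝ) (V : Matrix (Fin d0) (Fin d1) ℝ)
    (A : Fin n → Matrix (Fin d2) (Fin d0) ℝ) (y : Fin n → ℝ)
    (p : ℝ) (hp0 : 0 ≤ p) (hp1 : p < 1) :
    (1 / n : ℝ) * ∑ i : Fin n,
      ∫ ω : Fin d1 → Bool,
        (y i - Matrix.trace
          ((U * Matrix.diagonal (fun j => if ω j then (1 - p)⁻¹ else 0) * Vᵀ)ᵀ * A i)) ^ 2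
        ∂(Measure.pi fun _ : Fin d1 => dropMeasure p hp0)
    = (1 / n : ℝ) * ∑ i : Fin n, (y i - Matrix.trace ((U * Vᵀ)ᵀ * A i)) ^ 2
      + (p / (1 - p)) *
        ((1 / n : ℝ) * ∑ i : Fin n, ∑ j : Fin d1,
          ((fun a => U a j) ⬝ᵥ (A i).mulVec (fun b => V b j)) ^ 2) := by
  have hμ : ∀ ω : Fin d1 → Bool,
      ((Measure.pi fun _ : Fin d1 => dropMeasure p hp0) {ω}).toReal = ∏ j, wB p (ω j) := by
    intro ω
    rw [← Set.univ_pi_singleton, Measure.pi_pi, ENNReal.toReal_prod]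
    exact Finset.prod_congr rfl fun j _ => dropMeasure_singleton p hp0 hp1 (ω j)
  have hint : ∀ i : Fin n,
      ∫ ω : Fin d1 → Bool,
        (y i - Matrix.trace
          ((U * Matrix.diagonal (fun j => if ω j then (1 - p)⁻¹ else 0) * Vᵀ)ᵀ * A i)) ^ 2
        ∂(Measure.pi fun _ : Fin d1 => dropMeasure p hp0)
      = (y i - Matrix.trace ((U * Vᵀ)ᵀ * A i)) ^ 2
        + (p / (1 - p)) * ∑ j : Fin d1,
            ((fun a => U a j) ⬝ᵥ (A i).mulVec (fun b => V b j)) ^ 2 := by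
    intro i
    rw [integral_fintype .of_finite]; simp only [measureReal_def]
    set c : Fin d1 → ℝ := fun j => (fun a => U a j) ⬝ᵥ (A i).mulVec (fun b => V b j) with hc
    have h1 : ∀ ω : Fin d1 → Bool,
        ((Measure.pi fun _ : Fin d1 => dropMeasure p hp0) {ω}).toReal •
          (y i - Matrix.trace
            ((U * Matrix.diagonal (fun j => if ω j then (1 - p)⁻¹ else 0) * Vᵀ)ᵀ * A i)) ^ 2
        = (∏ j, wB p (ω j)) * (y i - ∑ j, xB p (ω j) * c j) ^ 2 := by
      intro ω
      rw [smul_eq_mul, hμ ω, trace_diag_eq]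
      rfl
    rw [Finset.sum_congr rfl fun ω _ => h1 ω, key_sum p hp1 c (y i)]
    congr 2
    have h2 : Matrix.trace ((U * Vᵀ)ᵀ * A i) = ∑ j, c j := by
      have := trace_diag_eq U V (A i) (fun _ => 1)
      simpa using this
    rw [h2]
  rw [Finset.sum_congr rfl fun i _ => hint i, Finset.sum_add_distrib, mul_add, ← Finset.mul_sum]
  ring
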